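/- Let m ≥ p + 1, let z_1, …, z_m ∈ ℝ^p, and let (a_1, b_1), …, (a_m, b_m) ∈ ℝ^2 satisfy: (i) for any p distinct indices i_1, …, i_p, the matrix with rows z_{i_1}^⊤, …, z_{i_p}^⊤ is invertible; (ii) for any p+1 distinct indices i_1, …, i_{p+1}, the (p+1)×(p+1) matrix whose rows are (z_{i_j}^⊤, a_{i_j}) is invertible; (iii) for any p+1 distinct indices i_1, …, i_{p+1}, the (p+1)×(p+1) matrix whose rows are (z_{i_j}^⊤, b_{i_j}) is invertible unless b_{i_1} = ⋯ = b_{i_{p+1}} = 0. Then there exist ε > 0 and M > 0 such that for all ω ≥ M, ℝ^p is covered by the union over all p-tuples (i_1, …, i_p) ∈ {1,…,m}^p of the sets ⋂_{i ∈ {1,…,m} \ {i_1,…,i_p}} { β ∈ ℝ^p : |a_i + b_i ω − ⟨z_i, β⟩| > ε }. -/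

import Mathlib

open Matrix Finset

private lemma entry_eq_inv_sum {n : ℕ} (N : Matrix (Fin n) (Fin n) ℝ) (hN : IsUnit N)
    (y : Fin n → ℝ) (j : Fin n) : y j = ∑ k, N⁻¹ j k * (N *ᵥ y) k := by
  have h : N⁻¹ *ᵥ (N *ᵥ y) = y := by
    rw [Matrix.mulVec_mulVec, Matrix.nonsing_inv_mul _ ((Matrix.isUnit_iff_isUnit_det N).mp hN),
      Matrix.one_mulVec]
  conv_lhs => rw [← h]
  simp [Matrix.mulVec, dotProduct]

theorem covering_lemma (m p : ℕ) (hmp : p + 1 ≤ m)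
    (z : Fin m → EuclideanSpace ℝ (Fin p)) (a b : Fin m → ℝ)
    (h1 : ∀ ι : Fin p → Fin m, Function.Injective ι →
      IsUnit (Matrix.of fun j k => z (ι j) k : Matrix (Fin p) (Fin p) ℝ))
    (h2 : ∀ ι : Fin (p + 1) → Fin m, Function.Injective ι →
      IsUnit (Matrix.of fun j k =>
        Fin.lastCases (a (ι j)) (fun k' => z (ι j) k') k :
          Matrix (Fin (p + 1)) (Fin (p + 1)) ℝ))
    (h3 : ∀ ι : Fin (p + 1) → Fin m, Function.Injective ι → (∃ j, b (ι j) ≠ 0) →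
      IsUnit (Matrix.of fun j k =>
        Fin.lastCases (b (ι j)) (fun k' => z (ι j) k') k :
          Matrix (Fin (p + 1)) (Fin (p + 1)) ℝ)) :
    ∃ ε > (0 : ℝ), ∃ M > (0 : ℝ), ∀ ω ≥ M, ∀ β : EuclideanSpace ℝ (Fin p),
      ∃ ι : Fin p → Fin m, ∀ i : Fin m, (∀ j, ι j ≠ i) →
        ε < |a i + b i * ω - (inner ℝ (z i) β : ℝ)| := by
  classical
  have hm : 0 < m := by omega
  have hne : Nonempty (Fin m) := ⟨⟨0, hm⟩⟩
  set Am : (Fin (p+1) → Fin m) → Matrix (Fin (p+1)) (Fin (p+1)) ℝ :=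
    fun ι => Matrix.of fun j k => Fin.lastCases (b (ι j)) (fun k' => z (ι j) k') k with hAm
  set Bm : (Fin (p+1) → Fin m) → Matrix (Fin (p+1)) (Fin (p+1)) ℝ :=
    fun ι => Matrix.of fun j k => Fin.lastCases (a (ι j)) (fun k' => z (ι j) k') k with hBm
  set CA : (Fin (p+1) → Fin m) → ℝ :=
    fun ι => ∑ k, |(Am ι)⁻¹ (Fin.last p) k| * (|a (ι k)| + 1) with hCA
  set SB : (Fin (p+1) → Fin m) → ℝ :=
    fun ι => ∑ k, |(Bm ι)⁻¹ (Fin.last p) k| with hSBdef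
  have hSB0 : ∀ ι, 0 ≤ SB ι := fun ι => Finset.sum_nonneg fun k _ => abs_nonneg _
  have hCA0 : ∀ ι, 0 ≤ CA ι := fun ι => Finset.sum_nonneg fun k _ =>
    mul_nonneg (abs_nonneg _) (by positivity)
  have hu : (Finset.univ : Finset (Fin (p+1) → Fin m)).Nonempty := Finset.univ_nonempty
  set ε := Finset.univ.inf' hu (fun ι => 1/(1 + SB ι)) with hεdef
  have hε0 : 0 < ε := by
    rw [hεdef, Finset.lt_inf'_iff]
    intro ι _
    have := hSB0 ι
    positivity
  have hεle : ∀ ι, ε ≤ 1/(1 + SB ι) := fun ι => Finset.inf'_le _ (Finset.mem_univ ι)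
  have hε1 : ε ≤ 1 := by
    refine (hεle hu.choose).trans ?_
    rw [div_le_one (by linarith [hSB0 hu.choose])]
    linarith [hSB0 hu.choose]
  set M := 1 + Finset.univ.sup' hu CA with hMdef
  have hsupCA : ∀ ι, CA ι ≤ Finset.univ.sup' hu CA := fun ι =>
    Finset.le_sup' CA (Finset.mem_univ ι)
  have hM0 : 0 < M := by
    have := (hCA0 hu.choose).trans (hsupCA hu.choose)
    rw [hMdef]; linarith
  refine ⟨ε, hε0, M, hM0, fun ω hω β => ?_⟩
  set T := Finset.univ.filter (fun i => |a i + b i * ω - (inner ℝ (z i) β : ℝ)| ≤ ε) with hT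
  have hTcard : T.card ≤ p := by
    by_contra hc
    push_neg at hc
    obtain ⟨S, hST, hScard⟩ := Finset.exists_subset_card_eq hc
    set ι : Fin (p+1) → Fin m := fun j => S.orderEmbOfFin hScard j with hι
    have hιinj : Function.Injective ι := (S.orderEmbOfFin hScard).injective
    have hmem : ∀ j, |a (ι j) + b (ι j) * ω - (inner ℝ (z (ι j)) β : ℝ)| ≤ ε := by
      intro j
      have := hST (S.orderEmbOfFin_mem hScard j)
      rw [hT, Finset.mem_filter] at this
      exact this.2
    by_cases hb : ∃ j, b (ι j) ≠ 0
    · -- some b nonzero: ω would be bounded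
      have hA : IsUnit (Am ι) := h3 ι hιinj hb
      set y : Fin (p+1) → ℝ := Fin.snoc (fun k => β k) (-ω) with hy
      have hmv : ∀ k, (Am ι *ᵥ y) k = (inner ℝ (z (ι k)) β : ℝ) - b (ι k) * ω := by
        intro k
        simp only [Matrix.mulVec, dotProduct, hAm, Matrix.of_apply,
          Fin.sum_univ_castSucc, Fin.lastCases_castSucc, Fin.lastCases_last,
          hy, Fin.snoc_castSucc, Fin.snoc_last, PiLp.inner_apply, RCLike.inner_apply,
          starRingEnd_apply, star_trivial]
        rw [Finset.sum_congr rfl fun x _ => mul_comm ((z (ι k)) x) (β x)]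
        ring
      have hmvb : ∀ k, |(Am ι *ᵥ y) k| ≤ |a (ι k)| + 1 := by
        intro k
        have h1 : (Am ι *ᵥ y) k = a (ι k) - (a (ι k) + b (ι k) * ω - (inner ℝ (z (ι k)) β : ℝ)) := by
          rw [hmv k]; ring
        rw [h1]
        calc |a (ι k) - (a (ι k) + b (ι k) * ω - (inner ℝ (z (ι k)) β : ℝ))|
            ≤ |a (ι k)| + |a (ι k) + b (ι k) * ω - (inner ℝ (z (ι k)) β : ℝ)| := abs_sub _ _
          _ ≤ |a (ι k)| + 1 := by linarith [hmem k]
      have hωle : ω ≤ CA ι := by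
        have hkey := entry_eq_inv_sum (Am ι) hA y (Fin.last p)
        have hylast : y (Fin.last p) = -ω := by rw [hy]; simp
        rw [hylast] at hkey
        calc ω = -(∑ k, (Am ι)⁻¹ (Fin.last p) k * (Am ι *ᵥ y) k) := by linarith
          _ ≤ |∑ k, (Am ι)⁻¹ (Fin.last p) k * (Am ι *ᵥ y) k| := neg_le_abs _
          _ ≤ ∑ k, |(Am ι)⁻¹ (Fin.last p) k * (Am ι *ᵥ y) k| := Finset.abs_sum_le_sum_abs _ _
          _ ≤ CA ι := by
              rw [hCA]
              refine Finset.sum_le_sum fun k _ => ?_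
              rw [abs_mul]
              exact mul_le_mul_of_nonneg_left (hmvb k) (abs_nonneg _)
      have := hsupCA ι
      rw [hMdef] at hω
      linarith
    · -- all b zero: contradiction with h2
      push_neg at hb
      have hB : IsUnit (Bm ι) := h2 ι hιinj
      set w : Fin (p+1) → ℝ := Fin.snoc (fun k => β k) (-1) with hw
      have hmv : ∀ k, (Bm ι *ᵥ w) k = (inner ℝ (z (ι k)) β : ℝ) - a (ι k) := by
        intro k
        simp only [Matrix.mulVec, dotProduct, hBm, Matrix.of_apply,
          Fin.sum_univ_castSucc, Fin.lastCases_castSucc, Fin.lastCases_last,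
          hw, Fin.snoc_castSucc, Fin.snoc_last, PiLp.inner_apply, RCLike.inner_apply,
          starRingEnd_apply, star_trivial]
        rw [Finset.sum_congr rfl fun x _ => mul_comm ((z (ι k)) x) (β x)]
        ring
      have hmvb : ∀ k, |(Bm ι *ᵥ w) k| ≤ ε := by
        intro k
        have h1 : (Bm ι *ᵥ w) k = -(a (ι k) + b (ι k) * ω - (inner ℝ (z (ι k)) β : ℝ)) := by
          rw [hmv k, hb k]; ring
        rw [h1, abs_neg]
        exact hmem k
      have hkey := entry_eq_inv_sum (Bm ι) hB w (Fin.last p)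
      have hwlast : w (Fin.last p) = -1 := by rw [hw]; simp
      rw [hwlast] at hkey
      have h1le : (1:ℝ) ≤ SB ι * ε := by
        calc (1:ℝ) = -(∑ k, (Bm ι)⁻¹ (Fin.last p) k * (Bm ι *ᵥ w) k) := by linarith
          _ ≤ |∑ k, (Bm ι)⁻¹ (Fin.last p) k * (Bm ι *ᵥ w) k| := neg_le_abs _
          _ ≤ ∑ k, |(Bm ι)⁻¹ (Fin.last p) k * (Bm ι *ᵥ w) k| := Finset.abs_sum_le_sum_abs _ _
          _ ≤ ∑ k, |(Bm ι)⁻¹ (Fin.last p) k| * ε := by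
              refine Finset.sum_le_sum fun k _ => ?_
              rw [abs_mul]
              exact mul_le_mul_of_nonneg_left (hmvb k) (abs_nonneg _)
          _ = SB ι * ε := by rw [hSBdef, ← Finset.sum_mul]
      have h2le := hεle ι
      rw [le_div_iff₀ (by linarith [hSB0 ι])] at h2le
      nlinarith [hSB0 ι, hε0]
  -- build the covering function
  set κ : Fin p → Fin m := fun j =>
    if h : (j : ℕ) < T.card then T.orderEmbOfFin rfl ⟨j, h⟩ else ⟨0, hm⟩ with hκ
  refine ⟨κ, fun i hi => ?_⟩
  by_contra hcon
  push_neg at hcon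
  have hiT : i ∈ T := by
    rw [hT, Finset.mem_filter]
    exact ⟨Finset.mem_univ i, hcon⟩
  obtain ⟨k, hk⟩ : ∃ k : Fin T.card, T.orderEmbOfFin rfl k = i := by
    have h1 : i ∈ (T : Set (Fin m)) := hiT
    rw [← Finset.range_orderEmbOfFin T rfl] at h1
    exact h1
  refine hi ⟨k.1, lt_of_lt_of_le k.2 hTcard⟩ ?_
  rw [hκ]
  simp only
  rw [dif_pos (show ((⟨k.1, lt_of_lt_of_le k.2 hTcard⟩ : Fin p) : ℕ) < T.card from k.2)]
  rw [← hk]
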